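/- For the star graph S_n = K_{1,n-1} with n ≥ 2 vertices, there is no reduced profile of n pairwise distinct linear orders on a set X of alternatives with |X| < n that is intermediate on S_n. In other words, any reduced intermediate profile on the star with n vertices requires at least n alternatives. -/

import Mathlib

open SimpleGraph

/-- `Geo G u w v` : vertex `w` lies geodesically between `u` and `v`
(i.e. on some shortest path from `u` to `v`). -/
def Geo {V : Type*} (G : SimpleGraph V) (u w v : V) : Prop :=
  G.dist u w + G.dist w v = G.dist u v

/-- A set of vertices is geodesically convex if it contains every vertex
lying on a shortest path between two of its members. -/
def GConvex {V : Type*} (G : SimpleGraph V) (C : Set V) : Prop :=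
  ∀ u ∈ C, ∀ v ∈ C, ∀ w, Geo G u w v → w ∈ C

/-- A profile of strict preference relations is intermediate on `G` if every
set `V_{ab}` of voters preferring `a` to `b` is geodesically convex. -/
def Intermediate {V A : Type*} (G : SimpleGraph V) (R : V → A → A → Prop) : Prop :=
  ∀ a b : A, GConvex G {i | R i a b}

/-- A median graph: connected, and every triple of vertices has a unique median. -/
def MedianGraph {V : Type*} (G : SimpleGraph V) : Prop :=
  G.Connected ∧ ∀ u v w : V, ∃! m : V, Geo G u m v ∧ Geo G u m w ∧ Geo G v m w

lemma aux_exists_top {X : Type*} [Fintype X] [Nonempty X] (r : X → X → Prop)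
    (hr : IsStrictTotalOrder X r) : ∃ m : X, ∀ x, ¬ r m x := by
  haveI : IsTrans X (flip r) := ⟨fun a b c h1 h2 => hr.trans c b a h2 h1⟩
  haveI : IsIrrefl X (flip r) := ⟨fun a => hr.irrefl a⟩
  have hw : WellFounded (flip r) := Finite.wellFounded_of_trans_of_irrefl _
  obtain ⟨m, -, hm⟩ := hw.has_min Set.univ ⟨Classical.arbitrary X, trivial⟩
  exact ⟨m, fun x hx => hm x trivial hx⟩

lemma aux_flip {X : Type*} [Fintype X] (r0 ri : X → X → Prop)
    (h0 : IsStrictTotalOrder X r0) (hi : IsStrictTotalOrder X ri) (hne : r0 ≠ ri) :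
    ∃ a b : X, r0 a b ∧ ri b a ∧ ∀ c, ¬ (r0 a c ∧ r0 c b) := by
  classical
  have hflip : ∃ a b, r0 a b ∧ ri b a := by
    by_contra hcon
    push_neg at hcon
    apply hne
    funext x y
    ext
    constructor
    · intro h
      have hxy : x ≠ y := fun he => h0.irrefl x (he ▸ h)
      rcases (by haveI := hi; exact trichotomous_of ri x y) with h' | h' | h'
      · exact h'
      · exact absurd h' hxy
      · exact absurd h' (hcon x y h)
    · intro h
      have hxy : x ≠ y := fun he => hi.irrefl x (he ▸ h)
      rcases (by haveI := h0; exact trichotomous_of r0 x y) with h' | h' | h'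
      · exact h'
      · exact absurd h' hxy
      · exact absurd h (hcon y x h')
  obtain ⟨a0, b0, ha0, hb0⟩ := hflip
  let S : Finset (X × X) := Finset.univ.filter (fun p => r0 p.1 p.2 ∧ ri p.2 p.1)
  let μ : X × X → ℕ := fun p => (Finset.univ.filter (fun c => r0 p.1 c ∧ r0 c p.2)).card
  have hS : S.Nonempty := ⟨(a0, b0), by simp [S, ha0, hb0]⟩
  obtain ⟨p, hpS, hpmin⟩ := S.exists_min_image μ hS
  simp only [S, Finset.mem_filter, Finset.mem_univ, true_and] at hpS
  refine ⟨p.1, p.2, hpS.1, hpS.2, ?_⟩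
  rintro c ⟨hac, hcb⟩
  have hca : c ≠ p.1 := fun he => h0.irrefl c (he ▸ hac)
  have hlt : ∃ q ∈ S, μ q < μ p := by
    rcases (by haveI := hi; exact trichotomous_of ri c p.1) with h' | h' | h'
    · refine ⟨(p.1, c), by simp [S, hac, h'], ?_⟩
      apply Finset.card_lt_card
      constructor
      · intro d hd
        simp only [Finset.mem_filter, Finset.mem_univ, true_and] at hd ⊢
        exact ⟨hd.1, h0.trans _ _ _ hd.2 hcb⟩
      · intro hsub
        have := hsub (Finset.mem_filter.mpr ⟨Finset.mem_univ c, hac, hcb⟩)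
        simp only [Finset.mem_filter, Finset.mem_univ, true_and] at this
        exact h0.irrefl c this.2
    · exact absurd h' hca
    · have h2 : ri p.2 c := hi.trans _ _ _ hpS.2 h'
      refine ⟨(c, p.2), by simp [S, hcb, h2], ?_⟩
      apply Finset.card_lt_card
      constructor
      · intro d hd
        simp only [Finset.mem_filter, Finset.mem_univ, true_and] at hd ⊢
        exact ⟨h0.trans _ _ _ hac hd.1, hd.2⟩
      · intro hsub
        have := hsub (Finset.mem_filter.mpr ⟨Finset.mem_univ c, hac, hcb⟩)
        simp only [Finset.mem_filter, Finset.mem_univ, true_and] at this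
        exact h0.irrefl c this.1
  obtain ⟨q, hq, hq'⟩ := hlt
  exact absurd (hpmin q hq) (by omega)

/-- On the star `K_{1,n-1}` (center the vertex `0`), no reduced profile with
fewer than `n` alternatives is intermediate. -/
theorem stmt9 (n : ℕ) (hn : 2 ≤ n) (X : Type*) [Fintype X]
    (hX : Fintype.card X < n) :
    ¬ ∃ R : Fin n → X → X → Prop,
        (∀ v, IsStrictTotalOrder X (R v)) ∧
        Function.Injective R ∧
        Intermediate (SimpleGraph.fromRel (fun i _ : Fin n => i.val = 0)) R := by
  classical
  rintro ⟨R, hSTO, hinj, hint⟩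
  set z : Fin n := ⟨0, by omega⟩ with hzdef
  set one : Fin n := ⟨1, by omega⟩ with honedef
  -- X is nonempty
  have hXne : Nonempty X := by
    by_contra hcon
    have hE : IsEmpty X := not_nonempty_iff.mp hcon
    have : R z = R one := by
      funext x; exact hE.elim x
    have := hinj this
    simp [hzdef, honedef, Fin.ext_iff] at this
  -- the star geometry: the center lies between any two distinct leaves
  set G := SimpleGraph.fromRel (fun i _ : Fin n => i.val = 0) with hG
  have hgeo : ∀ i j : Fin n, i.val ≠ 0 → j.val ≠ 0 → i ≠ j → Geo G i z j := by
    intro i j hi hj hij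
    have hadj : ∀ u : Fin n, u.val ≠ 0 → G.Adj u z := fun u hu => by
      rw [hG, SimpleGraph.fromRel_adj]
      exact ⟨fun h => hu (by rw [h]), Or.inr rfl⟩
    have h1 : G.dist i z = 1 := SimpleGraph.dist_eq_one_iff_adj.mpr (hadj i hi)
    have h2 : G.dist z j = 1 := by
      rw [SimpleGraph.dist_comm]; exact SimpleGraph.dist_eq_one_iff_adj.mpr (hadj j hj)
    let hw : G.Walk i j := ((hadj i hi).toWalk.append (hadj j hj).toWalk.reverse)
    have hwl : hw.length = 2 := by simp [hw]
    have hle : G.dist i j ≤ 2 := hwl ▸ SimpleGraph.dist_le hw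
    have hnadj : ¬ G.Adj i j := by
      rw [hG, SimpleGraph.fromRel_adj]
      rintro ⟨_, h | h⟩
      · exact hi h
      · exact hj h
    have hpos : 0 < G.dist i j :=
      SimpleGraph.Reachable.pos_dist_of_ne ⟨hw⟩ hij
    have hne1 : G.dist i j ≠ 1 := fun h => hnadj (SimpleGraph.dist_eq_one_iff_adj.mp h)
    have : G.dist i j = 2 := by omega
    unfold Geo; omega
  -- key consequence of intermediacy on the star
  have key : ∀ (x y : X) (i j : Fin n), i.val ≠ 0 → j.val ≠ 0 → i ≠ j →
      R i x y → R j x y → R z x y := by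
    intro x y i j hi hj hij hxi hxj
    exact hint x y i hxi j hxj z (hgeo i j hi hj hij)
  -- choose, for each leaf, an r0-adjacent flipped pair
  set L := {i : Fin n // i ≠ z} with hLdef
  haveI : Fintype L := by rw [hLdef]; infer_instance
  have hval : ∀ i : L, (i : Fin n).val ≠ 0 := by
    rintro ⟨i, hi⟩ h
    exact hi (Fin.ext h)
  have hne : ∀ i : L, R z ≠ R (i : Fin n) := by
    intro i h
    exact (hval i) (congrArg Fin.val (hinj h).symm)
  have hh := fun i : L => aux_flip (R z) (R (i : Fin n)) (hSTO z) (hSTO i) (hne i)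
  choose a b hab hba hadjp using hh
  -- asymmetry of R z
  have hasym : ∀ x y, R z x y → R z y x → False := fun x y h1 h2 =>
    (hSTO z).irrefl x ((hSTO z).trans _ _ _ h1 h2)
  -- the map i ↦ a i is injective
  have hainj : Function.Injective a := by
    intro i j hij
    by_contra hij'
    have hij'' : (i : Fin n) ≠ (j : Fin n) := fun h => hij' (Subtype.ext h)
    -- first b i = b j
    have hbb : b i = b j := by
      rcases (by haveI := hSTO z; exact trichotomous_of (R z) (b i) (b j)) with h' | h' | h'
      · exact absurd ⟨by rw [← hij]; exact hab i, h'⟩ (hadjp j (b i))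
      · exact h'
      · exact absurd ⟨by rw [hij]; exact hab j, h'⟩ (hadjp i (b j))
    have h1 : R (i : Fin n) (b i) (a i) := hba i
    have h2 : R (j : Fin n) (b i) (a i) := by rw [hbb, hij]; exact hba j
    have := key (b i) (a i) i j (hval i) (hval j) hij'' h1 h2
    exact hasym _ _ (hab i) this
  -- the top element of R z is not in the range of a
  obtain ⟨m, hm⟩ := aux_exists_top (R z) (hSTO z)
  have hma : ∀ i : L, a i ≠ m := fun i h => hm (b i) (h ▸ hab i)
  -- counting
  have hcardL : Fintype.card L = n - 1 := by
    show Fintype.card {i : Fin n // i ≠ z} = n - 1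
    rw [Fintype.card_subtype_compl, Fintype.card_subtype_eq, Fintype.card_fin]
  set T : Finset X := Finset.univ.image a with hT
  have hTcard : T.card = n - 1 := by
    rw [hT, Finset.card_image_of_injective _ hainj, Finset.card_univ, hcardL]
  have hmT : m ∉ T := by
    rw [hT]
    simp only [Finset.mem_image, Finset.mem_univ, true_and, not_exists]
    exact fun i h => hma i h
  have : (insert m T).card = n := by
    rw [Finset.card_insert_of_notMem hmT, hTcard]; omega
  have hle : (insert m T).card ≤ Fintype.card X := Finset.card_le_univ _
  omega
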